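/- For every forecasting system F, the set of infinite binary sequences for which F fails to be high-low calibrated is a residual (comeagre) subset of Cantor space. -/

import Mathlib

open Filter Topology

/-- The forecast probability on day `k` for data sequence `a`:
`F` applied to the first `k` bits of `a`. -/
noncomputable def fc (F : List Bool → ℝ) (a : ℕ → Bool) (k : ℕ) : ℝ :=
  F (List.ofFn (fun i : Fin k => a i))

/-- The discrepancy on day `k`: `a_k - π_k`. -/
noncomputable def disc (F : List Bool → ℝ) (a : ℕ → Bool) (k : ℕ) : ℝ :=
  (if a k then 1 else 0) - fc F a k

open Classical in
/-- Mean discrepancy over the days `k < n` satisfying `P`. -/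
noncomputable def avgDisc (F : List Bool → ℝ) (a : ℕ → Bool) (P : ℕ → Prop) (n : ℕ) : ℝ :=
  (∑ k ∈ (Finset.range n).filter P, disc F a k) /
    (((Finset.range n).filter P).card : ℝ)

/-- `F` is high-low calibrated for `a`: for each of the two groups of days
(forecast `≥ 1/2`, forecast `< 1/2`), either the group is finite or the mean
discrepancy over that group among the first `n` days tends to `0`. -/
def HighLowCalibrated (F : List Bool → ℝ) (a : ℕ → Bool) : Prop :=
  ({k | 1/2 ≤ fc F a k}.Finite ∨
      Tendsto (avgDisc F a (fun k => 1/2 ≤ fc F a k)) atTop (𝓝 0)) ∧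
  ({k | fc F a k < 1/2}.Finite ∨
      Tendsto (avgDisc F a (fun k => fc F a k < 1/2)) atTop (𝓝 0))

open Classical in
/-- The adversarial sequence against `F`: `a_k = 1` iff the forecast is `< 1/2`. -/
noncomputable def adv (F : List Bool → ℝ) : ℕ → Bool
  | k => if F (List.ofFn (fun i : Fin k => adv F i)) < 1/2 then true else false

/-! ### Auxiliary definitions and lemmas -/

lemma fc_congr (F : List Bool → ℝ) {a b : ℕ → Bool} {k : ℕ} (h : ∀ i < k, a i = b i) :
    fc F a k = fc F b k := by
  exact congrArg (fun f : Fin k → Bool => F (List.ofFn f)) (funext fun i => h i i.2)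

lemma disc_congr (F : List Bool → ℝ) {a b : ℕ → Bool} {k m : ℕ} (hk : k < m)
    (h : ∀ i < m, a i = b i) : disc F a k = disc F b k := by
  unfold disc
  rw [h k hk, fc_congr F (fun i hi => h i (hi.trans hk))]

lemma abs_disc_le (F : List Bool → ℝ) (hF : ∀ w, F w ∈ Set.Icc (0 : ℝ) 1)
    (a : ℕ → Bool) (k : ℕ) : |disc F a k| ≤ 1 := by
  obtain ⟨h0, h1⟩ := hF (List.ofFn (fun i : Fin k => a i))
  rw [abs_le]
  unfold disc fc
  constructor <;> split <;> linarith

/-- fc is in `[0,1]`. -/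
lemma fc_mem (F : List Bool → ℝ) (hF : ∀ w, F w ∈ Set.Icc (0 : ℝ) 1)
    (a : ℕ → Bool) (k : ℕ) : fc F a k ∈ Set.Icc (0 : ℝ) 1 := hF _

/-- A set depending only on finitely many coordinates is open. -/
lemma isOpen_of_finDep {m : ℕ} {p : (ℕ → Bool) → Prop}
    (hp : ∀ a b : ℕ → Bool, (∀ i < m, a i = b i) → p a → p b) :
    IsOpen {a : ℕ → Bool | p a} := by
  have hc : Continuous (fun a : ℕ → Bool => (fun i : Fin m => a i)) :=
    continuous_pi fun i => continuous_apply _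
  have he : {a : ℕ → Bool | p a} =
      (fun a : ℕ → Bool => (fun i : Fin m => a i)) ⁻¹'
      ((fun a : ℕ → Bool => (fun i : Fin m => a i)) '' {a | p a}) := by
    ext a
    constructor
    · exact fun ha => Set.mem_image_of_mem _ ha
    · rintro ⟨b, hb, hba⟩
      exact hp b a (fun i hi => congrFun hba ⟨i, hi⟩) hb
  rw [he]
  exact (isOpen_discrete _).preimage hc

open Classical in
/-- The open dense sets witnessing non-calibration. -/
def Gset (F : List Bool → ℝ) (n : ℕ) : Set (ℕ → Bool) :=
  {a | ∃ m : ℕ,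
    (n ≤ ((Finset.range m).filter (fun k => 1/2 ≤ fc F a k)).card ∧
      avgDisc F a (fun k => 1/2 ≤ fc F a k) m ≤ -(1/4)) ∨
    (n ≤ ((Finset.range m).filter (fun k => fc F a k < 1/2)).card ∧
      (1/4 : ℝ) ≤ avgDisc F a (fun k => fc F a k < 1/2) m)}

open Classical in
/-- Extend the prefix of `a` of length `L` adversarially against `F`. -/
noncomputable def extSeq (F : List Bool → ℝ) (a : ℕ → Bool) (L : ℕ) : ℕ → Bool
  | k => if k < L then a k else
      if F (List.ofFn (fun i : Fin k => extSeq F a L i)) < 1/2 then true else false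

lemma extSeq_lt (F : List Bool → ℝ) (a : ℕ → Bool) (L : ℕ) {k : ℕ} (h : k < L) :
    extSeq F a L k = a k := by
  rw [extSeq]; simp [h]

lemma extSeq_ge (F : List Bool → ℝ) (a : ℕ → Bool) (L : ℕ) {k : ℕ} (h : L ≤ k) :
    extSeq F a L k = if fc F (extSeq F a L) k < 1/2 then true else false := by
  rw [extSeq]
  simp [Nat.not_lt.2 h, fc]

lemma extSeq_disc_lo (F : List Bool → ℝ) (a : ℕ → Bool) (L : ℕ) {k : ℕ} (h : L ≤ k)
    (hlo : fc F (extSeq F a L) k < 1/2) : (1/2 : ℝ) ≤ disc F (extSeq F a L) k := by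
  have hb : extSeq F a L k = true := by rw [extSeq_ge F a L h, if_pos hlo]
  unfold disc
  rw [hb]
  simp only [if_true]
  linarith

lemma extSeq_disc_hi (F : List Bool → ℝ) (a : ℕ → Bool) (L : ℕ) {k : ℕ} (h : L ≤ k)
    (hhi : 1/2 ≤ fc F (extSeq F a L) k) : disc F (extSeq F a L) k ≤ -(1/2) := by
  have hb : extSeq F a L k = false := by
    rw [extSeq_ge F a L h, if_neg (not_lt.2 hhi)]
  unfold disc
  rw [hb]
  simp only [Bool.false_eq_true, if_false]
  linarith

/-- Congruence of the filtered data for sequences agreeing below `m`. -/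
lemma hi_filter_congr (F : List Bool → ℝ) {a b : ℕ → Bool} {m : ℕ}
    (h : ∀ i < m, a i = b i) :
    (Finset.range m).filter (fun k => 1/2 ≤ fc F a k) =
      (Finset.range m).filter (fun k => 1/2 ≤ fc F b k) := by
  classical
  apply Finset.filter_congr
  intro k hk
  rw [Finset.mem_range] at hk
  rw [fc_congr F (fun i hi => h i (hi.trans hk))]

lemma lo_filter_congr (F : List Bool → ℝ) {a b : ℕ → Bool} {m : ℕ}
    (h : ∀ i < m, a i = b i) :
    (Finset.range m).filter (fun k => fc F a k < 1/2) =
      (Finset.range m).filter (fun k => fc F b k < 1/2) := by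
  classical
  apply Finset.filter_congr
  intro k hk
  rw [Finset.mem_range] at hk
  rw [fc_congr F (fun i hi => h i (hi.trans hk))]

lemma avg_hi_congr (F : List Bool → ℝ) {a b : ℕ → Bool} {m : ℕ}
    (h : ∀ i < m, a i = b i) :
    avgDisc F a (fun k => 1/2 ≤ fc F a k) m = avgDisc F b (fun k => 1/2 ≤ fc F b k) m := by
  classical
  unfold avgDisc
  rw [Finset.filter_congr_decidable, Finset.filter_congr_decidable,
    hi_filter_congr F h]
  congr 1
  apply Finset.sum_congr rfl
  intro k hk
  have hkm : k < m := Finset.mem_range.1 (Finset.mem_of_mem_filter _ hk)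
  exact disc_congr F hkm h

lemma avg_lo_congr (F : List Bool → ℝ) {a b : ℕ → Bool} {m : ℕ}
    (h : ∀ i < m, a i = b i) :
    avgDisc F a (fun k => fc F a k < 1/2) m = avgDisc F b (fun k => fc F b k < 1/2) m := by
  classical
  unfold avgDisc
  rw [Finset.filter_congr_decidable, Finset.filter_congr_decidable,
    lo_filter_congr F h]
  congr 1
  apply Finset.sum_congr rfl
  intro k hk
  have hkm : k < m := Finset.mem_range.1 (Finset.mem_of_mem_filter _ hk)
  exact disc_congr F hkm h

lemma isOpen_Gset (F : List Bool → ℝ) (n : ℕ) : IsOpen (Gset F n) := by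
  classical
  have : Gset F n = ⋃ m : ℕ, {a : ℕ → Bool |
    (n ≤ ((Finset.range m).filter (fun k => 1/2 ≤ fc F a k)).card ∧
      avgDisc F a (fun k => 1/2 ≤ fc F a k) m ≤ -(1/4)) ∨
    (n ≤ ((Finset.range m).filter (fun k => fc F a k < 1/2)).card ∧
      (1/4 : ℝ) ≤ avgDisc F a (fun k => fc F a k < 1/2) m)} := by
    ext a
    simp [Gset]
  rw [this]
  apply isOpen_iUnion
  intro m
  apply isOpen_of_finDep (m := m)
  intro a b hab hp
  rcases hp with ⟨h1, h2⟩ | ⟨h1, h2⟩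
  · left
    rw [hi_filter_congr F hab] at h1
    rw [avg_hi_congr F hab] at h2
    exact ⟨h1, h2⟩
  · right
    rw [lo_filter_congr F hab] at h1
    rw [avg_lo_congr F hab] at h2
    exact ⟨h1, h2⟩

/-- The key quantitative lemma: if `b` is adversarial past `L`, then `b ∈ Gset F n`. -/
lemma mem_Gset_of_adversarial (F : List Bool → ℝ) (hF : ∀ w, F w ∈ Set.Icc (0 : ℝ) 1)
    (b : ℕ → Bool) (L n : ℕ)
    (hlo : ∀ k, L ≤ k → fc F b k < 1/2 → (1/2 : ℝ) ≤ disc F b k)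
    (hhi : ∀ k, L ≤ k → 1/2 ≤ fc F b k → disc F b k ≤ -(1/2)) :
    b ∈ Gset F n := by
  classical
  set N := max (5*L+1) n with hN
  have hNL : 5*L+1 ≤ N := le_max_left _ _
  have hNn : n ≤ N := le_max_right _ _
  set m := L + 2*N with hm
  set s := Finset.Ico L m with hs
  -- counts over the new interval
  set chi := (s.filter (fun k => 1/2 ≤ fc F b k)).card with hchi
  set clo := (s.filter (fun k => fc F b k < 1/2)).card with hclo
  have hcards : chi + clo = 2*N := by
    have h1 := Finset.card_filter_add_card_filter_not
      (s := s) (p := fun k => 1/2 ≤ fc F b k)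
    simp only [not_le] at h1
    rw [hchi, hclo, h1, hs, Nat.card_Ico]
    omega
  -- decomposition of range m
  have hrange : Finset.range m = Finset.range L ∪ s := by
    rw [hs, Finset.range_eq_Ico, Finset.range_eq_Ico]
    exact (Finset.Ico_union_Ico_eq_Ico (c := m) (Nat.zero_le L) (by omega)).symm
  have hdisj : Disjoint (Finset.range L) s := by
    rw [Finset.disjoint_left]
    intro k hk hk'
    rw [Finset.mem_range] at hk
    rw [hs, Finset.mem_Ico] at hk'
    omega
  rcases le_or_gt N chi with hbig | hsmall
  · -- high side is big
    refine ⟨m, Or.inl ⟨?_, ?_⟩⟩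
    · calc n ≤ N := hNn
        _ ≤ chi := hbig
        _ ≤ ((Finset.range m).filter (fun k => 1/2 ≤ fc F b k)).card := by
            apply Finset.card_le_card
            apply Finset.filter_subset_filter
            rw [hrange]; exact Finset.subset_union_right
    · -- the average is ≤ -1/4
      have hsplit : (Finset.range m).filter (fun k => 1/2 ≤ fc F b k) =
          ((Finset.range L).filter (fun k => 1/2 ≤ fc F b k)) ∪
            (s.filter (fun k => 1/2 ≤ fc F b k)) := by
        rw [hrange, Finset.filter_union]
      have hdisj' : Disjoint ((Finset.range L).filter (fun k => 1/2 ≤ fc F b k))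
          (s.filter (fun k => 1/2 ≤ fc F b k)) :=
        Finset.disjoint_filter_filter hdisj
      set cpre := ((Finset.range L).filter (fun k => 1/2 ≤ fc F b k)).card with hcpre
      have hcpreL : cpre ≤ L := le_trans (Finset.card_filter_le _ _) (Finset.card_range _).le
      have hcard_eq : ((Finset.range m).filter (fun k => 1/2 ≤ fc F b k)).card
          = cpre + chi := by
        rw [hsplit, Finset.card_union_of_disjoint hdisj']
      have hpre_ub : ∑ k ∈ (Finset.range L).filter (fun k => 1/2 ≤ fc F b k), disc F b k
          ≤ (L : ℝ) := by
        calc ∑ k ∈ (Finset.range L).filter (fun k => 1/2 ≤ fc F b k), disc F b k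
            ≤ ((Finset.range L).filter (fun k => 1/2 ≤ fc F b k)).card • (1 : ℝ) :=
              Finset.sum_le_card_nsmul _ _ _
                (fun k _ => (abs_le.1 (abs_disc_le F hF b k)).2)
          _ ≤ (L : ℝ) := by
              rw [nsmul_eq_mul, mul_one]
              exact_mod_cast hcpreL
      have hnew_ub : ∑ k ∈ s.filter (fun k => 1/2 ≤ fc F b k), disc F b k
          ≤ (chi : ℝ) * (-(1/2)) := by
        calc ∑ k ∈ s.filter (fun k => 1/2 ≤ fc F b k), disc F b k
            ≤ (s.filter (fun k => 1/2 ≤ fc F b k)).card • (-(1/2) : ℝ) := by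
              apply Finset.sum_le_card_nsmul
              intro k hk
              rw [Finset.mem_filter, hs, Finset.mem_Ico] at hk
              exact hhi k hk.1.1 hk.2
          _ = (chi : ℝ) * (-(1/2)) := by rw [nsmul_eq_mul, hchi]
      have hsum_ub : ∑ k ∈ (Finset.range m).filter (fun k => 1/2 ≤ fc F b k), disc F b k
          ≤ (L : ℝ) - (chi : ℝ)/2 := by
        rw [hsplit, Finset.sum_union hdisj']
        have := hpre_ub
        have := hnew_ub
        linarith
      have hcpos : (0 : ℝ) < (((Finset.range m).filter (fun k => 1/2 ≤ fc F b k)).card : ℝ) := by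
        rw [hcard_eq]
        have : 1 ≤ cpre + chi := by omega
        exact_mod_cast Nat.lt_of_lt_of_le Nat.zero_lt_one this
      unfold avgDisc
      rw [Finset.filter_congr_decidable, div_le_iff₀ hcpos]
      have hcub : (((Finset.range m).filter (fun k => 1/2 ≤ fc F b k)).card : ℝ)
          ≤ (L : ℝ) + (chi : ℝ) := by
        rw [hcard_eq]
        push_cast
        have : (cpre : ℝ) ≤ (L : ℝ) := by exact_mod_cast hcpreL
        linarith
      have hchiL : (5*(L:ℝ)+1) ≤ (chi : ℝ) := by exact_mod_cast le_trans hNL hbig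
      nlinarith [hsum_ub, hcub, hchiL, hcpos]
  · -- low side is big
    have hlobig : N ≤ clo := by omega
    refine ⟨m, Or.inr ⟨?_, ?_⟩⟩
    · calc n ≤ N := hNn
        _ ≤ clo := hlobig
        _ ≤ ((Finset.range m).filter (fun k => fc F b k < 1/2)).card := by
            apply Finset.card_le_card
            apply Finset.filter_subset_filter
            rw [hrange]; exact Finset.subset_union_right
    · have hsplit : (Finset.range m).filter (fun k => fc F b k < 1/2) =
          ((Finset.range L).filter (fun k => fc F b k < 1/2)) ∪
            (s.filter (fun k => fc F b k < 1/2)) := by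
        rw [hrange, Finset.filter_union]
      have hdisj' : Disjoint ((Finset.range L).filter (fun k => fc F b k < 1/2))
          (s.filter (fun k => fc F b k < 1/2)) :=
        Finset.disjoint_filter_filter hdisj
      set cpre := ((Finset.range L).filter (fun k => fc F b k < 1/2)).card with hcpre
      have hcpreL : cpre ≤ L := le_trans (Finset.card_filter_le _ _) (Finset.card_range _).le
      have hcard_eq : ((Finset.range m).filter (fun k => fc F b k < 1/2)).card
          = cpre + clo := by
        rw [hsplit, Finset.card_union_of_disjoint hdisj']
      have hpre_lb : -(L : ℝ) ≤
          ∑ k ∈ (Finset.range L).filter (fun k => fc F b k < 1/2), disc F b k := by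
        calc -(L : ℝ) ≤ ((Finset.range L).filter (fun k => fc F b k < 1/2)).card • (-1 : ℝ) := by
              rw [nsmul_eq_mul, mul_neg_one, neg_le_neg_iff]
              exact_mod_cast hcpreL
          _ ≤ ∑ k ∈ (Finset.range L).filter (fun k => fc F b k < 1/2), disc F b k :=
              Finset.card_nsmul_le_sum _ _ _
                (fun k _ => (abs_le.1 (abs_disc_le F hF b k)).1)
      have hnew_lb : (clo : ℝ) * (1/2) ≤
          ∑ k ∈ s.filter (fun k => fc F b k < 1/2), disc F b k := by
        calc (clo : ℝ) * (1/2) = (s.filter (fun k => fc F b k < 1/2)).card • ((1:ℝ)/2) := by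
              rw [nsmul_eq_mul, hclo]
          _ ≤ ∑ k ∈ s.filter (fun k => fc F b k < 1/2), disc F b k := by
              apply Finset.card_nsmul_le_sum
              intro k hk
              rw [Finset.mem_filter, hs, Finset.mem_Ico] at hk
              exact hlo k hk.1.1 hk.2
      have hsum_lb : (clo : ℝ)/2 - (L : ℝ) ≤
          ∑ k ∈ (Finset.range m).filter (fun k => fc F b k < 1/2), disc F b k := by
        rw [hsplit, Finset.sum_union hdisj']
        linarith
      have hcpos : (0 : ℝ) < (((Finset.range m).filter (fun k => fc F b k < 1/2)).card : ℝ) := by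
        rw [hcard_eq]
        have : 1 ≤ cpre + clo := by omega
        exact_mod_cast Nat.lt_of_lt_of_le Nat.zero_lt_one this
      unfold avgDisc
      rw [Finset.filter_congr_decidable, le_div_iff₀ hcpos]
      have hcub : (((Finset.range m).filter (fun k => fc F b k < 1/2)).card : ℝ)
          ≤ (L : ℝ) + (clo : ℝ) := by
        rw [hcard_eq]
        push_cast
        have : (cpre : ℝ) ≤ (L : ℝ) := by exact_mod_cast hcpreL
        linarith
      have hcloL : (5*(L:ℝ)+1) ≤ (clo : ℝ) := by exact_mod_cast le_trans hNL hlobig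
      nlinarith [hsum_lb, hcub, hcloL, hcpos]

lemma dense_Gset (F : List Bool → ℝ) (hF : ∀ w, F w ∈ Set.Icc (0 : ℝ) 1) (n : ℕ) :
    Dense (Gset F n) := by
  classical
  rw [dense_iff_inter_open]
  rintro U hU ⟨a, ha⟩
  have hnhds : U ∈ 𝓝 a := hU.mem_nhds ha
  rw [nhds_pi] at hnhds
  rw [Filter.mem_pi] at hnhds
  obtain ⟨I, hIfin, t, ht, hsub⟩ := hnhds
  obtain ⟨c, hc⟩ := hIfin.bddAbove
  set L := c + 1 with hL
  set b := extSeq F a L with hb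
  have hbU : b ∈ U := by
    apply hsub
    intro i hi
    have : b i = a i := extSeq_lt F a L (by have := hc hi; omega)
    rw [this]
    have := ht i
    rwa [nhds_discrete, Filter.mem_pure] at this
  have hbG : b ∈ Gset F n :=
    mem_Gset_of_adversarial F hF b L n
      (fun k hk hlo => extSeq_disc_lo F a L hk hlo)
      (fun k hk hhi => extSeq_disc_hi F a L hk hhi)
  exact ⟨b, hbU, hbG⟩

/-- From the quantitative data, one side of calibration fails. -/
lemma not_calib_side (F : List Bool → ℝ) (a : ℕ → Bool) (P : ℕ → Prop) [DecidablePred P]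
    (h : ∀ n : ℕ, ∃ m, n ≤ ((Finset.range m).filter P).card ∧
      (1/4 : ℝ) ≤ |avgDisc F a P m|) :
    ¬ ({k | P k}.Finite ∨ Tendsto (avgDisc F a P) atTop (𝓝 0)) := by
  classical
  rintro (hfin | htend)
  · obtain ⟨m, hm, -⟩ := h (hfin.toFinset.card + 1)
    have hsub : (Finset.range m).filter P ⊆ hfin.toFinset := by
      intro k hk
      rw [Set.Finite.mem_toFinset]
      exact (Finset.mem_filter.1 hk).2
    have := Finset.card_le_card hsub
    omega
  · rw [Metric.tendsto_atTop] at htend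
    obtain ⟨M, hM⟩ := htend (1/4) (by norm_num)
    obtain ⟨m, hm1, hm2⟩ := h M
    have hmM : M ≤ m := le_trans hm1 (le_trans (Finset.card_filter_le _ _) (Finset.card_range _).le)
    have := hM m hmM
    rw [Real.dist_eq, sub_zero] at this
    linarith

theorem noncalibration_set_is_residual
    (F : List Bool → ℝ) (hF : ∀ w, F w ∈ Set.Icc (0 : ℝ) 1) :
    {a : ℕ → Bool | ¬ HighLowCalibrated F a} ∈ residual (ℕ → Bool) := by
  classical
  have hG : ∀ n, Gset F n ∈ residual (ℕ → Bool) := fun n =>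
    residual_of_dense_open (isOpen_Gset F n) (dense_Gset F hF n)
  have hInter : (⋂ n, Gset F n) ∈ residual (ℕ → Bool) := by
    rw [countable_iInter_mem]
    exact hG
  apply Filter.mem_of_superset hInter
  intro a ha
  simp only [Set.mem_iInter] at ha
  -- ha : ∀ n, a ∈ Gset F n
  set A := fun n : ℕ => ∃ m, n ≤ ((Finset.range m).filter (fun k => 1/2 ≤ fc F a k)).card ∧
    avgDisc F a (fun k => 1/2 ≤ fc F a k) m ≤ -(1/4) with hA
  set B := fun n : ℕ => ∃ m, n ≤ ((Finset.range m).filter (fun k => fc F a k < 1/2)).card ∧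
    (1/4 : ℝ) ≤ avgDisc F a (fun k => fc F a k < 1/2) m with hB
  have hAB : ∀ n, A n ∨ B n := by
    intro n
    obtain ⟨m, hm⟩ := ha n
    rcases hm with ⟨h1, h2⟩ | ⟨h1, h2⟩
    · exact Or.inl ⟨m, h1, h2⟩
    · exact Or.inr ⟨m, h1, h2⟩
  have hmono : (∀ n, A n) ∨ (∀ n, B n) := by
    by_cases hAall : ∀ n, A n
    · exact Or.inl hAall
    · push_neg at hAall
      obtain ⟨n₀, hn₀⟩ := hAall
      right
      intro n
      rcases hAB (max n n₀) with hA' | hB'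
      · exfalso
        obtain ⟨m, hm1, hm2⟩ := hA'
        exact hn₀ ⟨m, le_trans (le_max_right _ _) hm1, hm2⟩
      · obtain ⟨m, hm1, hm2⟩ := hB'
        exact ⟨m, le_trans (le_max_left _ _) hm1, hm2⟩
  intro hcal
  rcases hmono with hAll | hAll
  · exact not_calib_side F a (fun k => 1/2 ≤ fc F a k)
      (fun n => by
        obtain ⟨m, h1, h2⟩ := hAll n
        exact ⟨m, h1, by rw [abs_of_nonpos (by linarith)]; linarith⟩) hcal.1
  · exact not_calib_side F a (fun k => fc F a k < 1/2)
      (fun n => by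
        obtain ⟨m, h1, h2⟩ := hAll n
        exact ⟨m, h1, le_trans h2 (le_abs_self _)⟩) hcal.2
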